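/- Let β ≥ 1 and for σ > 0 let λ_0(σ) be the unique positive root of λ^{β+1} - λ^β = σ. Then β(λ_0 - 1) is bounded as σ varies over a set S ⊆ (0,∞) if and only if βσ is bounded on S. Consequently, if βσ → ∞ then (λ_0 - 1)/((β+1)λ_0 - β) = (1/(β+1))(1 + o(1)). -/

import Mathlib

open Filter

/-- let λ₀(σ) be the unique positive root of λ^{β+1} - λ^β = σ.
Then β(λ₀(σ)-1) is bounded on a set S ⊆ (0,∞) iff βσ is bounded on S;
consequently, along any sequence with βσ → ∞, the limiting average throughput
(λ₀-1)/((β+1)λ₀-β) equals (1/(β+1))(1+o(1)). -/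
theorem stmt16 (β : ℕ) (hβ : 1 ≤ β)
    (lam : ℝ → ℝ)
    (hlam : ∀ σ : ℝ, 0 < σ → 0 < lam σ ∧ lam σ ^ (β + 1) - lam σ ^ β = σ) :
    (∀ S : Set ℝ, S ⊆ Set.Ioi 0 →
      ((∃ M : ℝ, ∀ σ ∈ S, β * (lam σ - 1) ≤ M) ↔ (∃ M : ℝ, ∀ σ ∈ S, β * σ ≤ M))) ∧
    (∀ s : ℕ → ℝ, (∀ k, 0 < s k) →
      Tendsto (fun k => β * s k) atTop atTop →
      Tendsto (fun k => ((lam (s k) - 1) / ((β + 1) * lam (s k) - β)) * (β + 1))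
        atTop (nhds 1)) := by
  have hβR : (1:ℝ) ≤ β := by exact_mod_cast hβ
  -- λ > 1
  have hgt : ∀ σ : ℝ, 0 < σ → 1 < lam σ := by
    intro σ hσ
    obtain ⟨hpos, heq⟩ := hlam σ hσ
    by_contra h
    push_neg at h
    have h1 : lam σ ^ (β + 1) ≤ lam σ ^ β := by
      calc lam σ ^ (β + 1) = lam σ ^ β * lam σ := pow_succ _ _
        _ ≤ lam σ ^ β * 1 := mul_le_mul_of_nonneg_left h (pow_nonneg hpos.le _)
        _ = lam σ ^ β := mul_one _
    linarith
  have hfact : ∀ σ : ℝ, 0 < σ → lam σ ^ β * (lam σ - 1) = σ := by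
    intro σ hσ
    have h := (hlam σ hσ).2
    have h2 : lam σ ^ β * (lam σ - 1) = lam σ ^ (β + 1) - lam σ ^ β := by
      rw [mul_sub, mul_one, ← pow_succ]
    exact h2.trans h
  -- λ^β ≤ exp(β(λ-1))
  have hexp : ∀ σ : ℝ, 0 < σ → lam σ ^ β ≤ Real.exp (β * (lam σ - 1)) := by
    intro σ hσ
    have h1 : lam σ ≤ Real.exp (lam σ - 1) := by
      have := Real.add_one_le_exp (lam σ - 1)
      linarith
    calc lam σ ^ β ≤ Real.exp (lam σ - 1) ^ β :=
          pow_le_pow_left₀ (lt_trans one_pos (hgt σ hσ)).le h1 β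
      _ = Real.exp (β * (lam σ - 1)) := (Real.exp_nat_mul _ β).symm
  -- σ ≥ λ - 1
  have hge : ∀ σ : ℝ, 0 < σ → lam σ - 1 ≤ σ := by
    intro σ hσ
    have h1 : (1:ℝ) ≤ lam σ ^ β := by
      calc (1:ℝ) = 1 ^ β := (one_pow β).symm
        _ ≤ lam σ ^ β := pow_le_pow_left₀ zero_le_one (hgt σ hσ).le β
    have h2 := hfact σ hσ
    nlinarith [hgt σ hσ]
  have hbound : ∀ σ : ℝ, 0 < σ → β * σ = lam σ ^ β * (β * (lam σ - 1)) := by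
    intro σ hσ
    linear_combination (β:ℝ) * (hfact σ hσ).symm
  -- the key bound: βσ ≤ exp(βt) * βt
  have hkey : ∀ σ : ℝ, 0 < σ → ∀ C : ℝ, β * (lam σ - 1) ≤ C →
      β * σ ≤ Real.exp C * C := by
    intro σ hσ C hC
    have ht : 0 ≤ (β:ℝ) * (lam σ - 1) := by
      have := hgt σ hσ; nlinarith
    calc β * σ = lam σ ^ β * (β * (lam σ - 1)) := hbound σ hσ
      _ ≤ Real.exp (β * (lam σ - 1)) * (β * (lam σ - 1)) :=
          mul_le_mul_of_nonneg_right (hexp σ hσ) ht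
      _ ≤ Real.exp C * C := by
          have h1 : Real.exp (β * (lam σ - 1)) ≤ Real.exp C := Real.exp_le_exp.mpr hC
          nlinarith [Real.exp_pos C, Real.exp_pos ((β:ℝ) * (lam σ - 1))]
  constructor
  · intro S hS
    constructor
    · rintro ⟨M, hM⟩
      refine ⟨Real.exp (max M 0) * max M 0, fun σ hσ => ?_⟩
      exact hkey σ (hS hσ) _ ((hM σ hσ).trans (le_max_left _ _))
    · rintro ⟨M, hM⟩
      refine ⟨M, fun σ hσ => ?_⟩
      have hσ0 : 0 < σ := hS hσ
      have h1 := hge σ hσ0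
      have h2 := hM σ hσ
      nlinarith
  · intro s hs htend
    -- β(λ-1) → ∞
    have hu : Tendsto (fun k => (β:ℝ) * (lam (s k) - 1)) atTop atTop := by
      rw [tendsto_atTop] at htend ⊢
      intro C
      filter_upwards [htend (Real.exp (max C 0) * max C 0 + 1)] with k hk
      by_contra h
      push_neg at h
      have h1 : (β:ℝ) * (lam (s k) - 1) ≤ max C 0 := le_trans h.le (le_max_left _ _)
      have h2 := hkey (s k) (hs k) (max C 0) h1
      linarith
    have hu' : Tendsto (fun k => ((β:ℝ) + 1) * (lam (s k) - 1)) atTop atTop := by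
      apply tendsto_atTop_mono _ hu
      intro k
      have := hgt (s k) (hs k)
      nlinarith
    have hu1 : Tendsto (fun k => ((β:ℝ) + 1) * (lam (s k) - 1) + 1) atTop atTop :=
      tendsto_atTop_add_const_right _ 1 hu'
    have hinv : Tendsto (fun k => (((β:ℝ) + 1) * (lam (s k) - 1) + 1)⁻¹) atTop (nhds 0) :=
      hu1.inv_tendsto_atTop
    have heq : ∀ k, ((lam (s k) - 1) / ((β + 1) * lam (s k) - β)) * (β + 1)
        = 1 - (((β:ℝ) + 1) * (lam (s k) - 1) + 1)⁻¹ := by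
      intro k
      have hpos : 0 < ((β:ℝ) + 1) * (lam (s k) - 1) + 1 := by
        have := hgt (s k) (hs k); nlinarith
      have hden : ((β:ℝ) + 1) * lam (s k) - β = ((β:ℝ) + 1) * (lam (s k) - 1) + 1 := by
        ring
      rw [hden]
      rw [div_mul_eq_mul_div, inv_eq_one_div, eq_sub_iff_add_eq, ← add_div, div_eq_one_iff_eq hpos.ne']
      ring
    have : Tendsto (fun k => 1 - (((β:ℝ) + 1) * (lam (s k) - 1) + 1)⁻¹) atTop (nhds 1) := by
      have := tendsto_const_nhds (α := ℕ) (x := (1:ℝ)) |>.sub hinv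
      simpa using this
    exact this.congr (fun k => (heq k).symm)
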